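/- (Pliss lemma, multiplicative finite version.) Given 0 < γ₀ < γ₁ and a > 1, there exist n₀ ≥ 1 and l > 0 such that for every finite sequence a_0, ..., a_n of reals with n > n₀, a⁻¹ < a_i < a for all i, and ∏_{i=0}^{n} a_i < γ₀^{n}, there exist indices 1 ≤ n_1 < n_2 < ... < n_r ≤ n with r > l·n such that for every j and every k with n_j < k ≤ n, one has ∏_{i=n_j+1}^{k} a_i < γ₁^{k - n_j}. -/

import Mathlib

open Finset

noncomputable def pT (c : ℕ → ℝ) (m : ℕ) : ℝ := ∑ i ∈ Finset.range (m+1), c i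

open Classical in
noncomputable def pP (c : ℕ → ℝ) (n : ℕ) : Finset ℕ :=
  (Finset.Icc 1 n).filter (fun m => ∀ k, m < k → k ≤ n → pT c k < pT c m)

open Classical in
lemma pliss_core (c : ℕ → ℝ) (n : ℕ) (B : ℝ) (hB : 0 < B)
    (hc : ∀ i, i ≤ n → -B ≤ c i) :
    ∀ d m, 1 ≤ m → m + d = n → ∀ k, m ≤ k → k ≤ n →
      pT c k ≤ pT c n + B * ((pP c n).filter (fun x => m ≤ x)).card := by
  intro d
  induction d with
  | zero =>
    intro m hm1 hmn k hmk hkn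
    have hm : m = n := by omega
    have hk : k = n := by omega
    subst hm hk
    have : (0:ℝ) ≤ B * ((pP c k).filter (fun x => k ≤ x)).card := by positivity
    linarith
  | succ d ih =>
    intro m hm1 hmn k hmk hkn
    have hcard : (((pP c n).filter (fun x => m+1 ≤ x)).card : ℝ)
        ≤ (((pP c n).filter (fun x => m ≤ x)).card : ℝ) := by
      have hsub : (pP c n).filter (fun x => m+1 ≤ x) ⊆ (pP c n).filter (fun x => m ≤ x) := by
        intro x hx
        rcases Finset.mem_filter.1 hx with ⟨h1, h2⟩
        exact Finset.mem_filter.2 ⟨h1, by omega⟩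
      exact_mod_cast Finset.card_le_card hsub
    rcases Nat.lt_or_ge m k with hlt | hge
    · have h := ih (m+1) (by omega) (by omega) k (by omega) hkn
      nlinarith
    · have hk : k = m := by omega
      subst hk
      by_cases H : ∀ k', k < k' → k' ≤ n → pT c k' < pT c k
      · -- k is a Pliss time
        have hkP : k ∈ pP c n := by
          simp only [pP, Finset.mem_filter, Finset.mem_Icc]
          exact ⟨⟨hm1, hkn⟩, H⟩
        have h1 := ih (k+1) (by omega) (by omega) (k+1) (le_refl _) (by omega)
        have hstep : pT c k ≤ pT c (k+1) + B := by
          have : pT c (k+1) = pT c k + c (k+1) := by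
            simp [pT, Finset.sum_range_succ]
          have hck := hc (k+1) (by omega)
          linarith
        have hins : (((pP c n).filter (fun x => k+1 ≤ x)).card : ℝ) + 1
            ≤ (((pP c n).filter (fun x => k ≤ x)).card : ℝ) := by
          have hsub : insert k ((pP c n).filter (fun x => k+1 ≤ x))
              ⊆ (pP c n).filter (fun x => k ≤ x) := by
            intro x hx
            rcases Finset.mem_insert.1 hx with rfl | hx
            · exact Finset.mem_filter.2 ⟨hkP, le_refl _⟩
            · rcases Finset.mem_filter.1 hx with ⟨h1, h2⟩
              exact Finset.mem_filter.2 ⟨h1, by omega⟩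
          have hnotmem : k ∉ (pP c n).filter (fun x => k+1 ≤ x) := by
            simp
          have := Finset.card_le_card hsub
          rw [Finset.card_insert_of_notMem hnotmem] at this
          exact_mod_cast this
        nlinarith
      · push_neg at H
        obtain ⟨k', hk1, hk2, hk3⟩ := H
        have h := ih (k+1) (by omega) (by omega) k' (by omega) hk2
        nlinarith

open Classical in
lemma pliss_count (c : ℕ → ℝ) (n : ℕ) (B : ℝ) (hB : 0 < B) (hn : 1 ≤ n)
    (hc : ∀ i, i ≤ n → -B ≤ c i) :
    pT c 1 ≤ pT c n + B * (pP c n).card := by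
  have h := pliss_core c n B hB hc (n - 1) 1 (le_refl _) (by omega) 1 (le_refl _) hn
  have hcard : (((pP c n).filter (fun x => 1 ≤ x)).card : ℝ) ≤ ((pP c n).card : ℝ) := by
    exact_mod_cast Finset.card_le_card (Finset.filter_subset _ _)
  nlinarith



/-- Pliss lemma, multiplicative finite version: given `0 < γ₀ < γ₁` and `a > 1`,
there are `n₀ ≥ 1` and a density `l > 0` such that any finite sequence
`a_0, …, a_n` (with `n > n₀`) pinched between `a⁻¹` and `a` whose total product is
`< γ₀ ^ n` admits more than `l·n` Pliss times `1 ≤ n_1 < … < n_r ≤ n`, from each of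
which all forward partial products contract at rate `γ₁`. -/
theorem stmt7 (γ₀ γ₁ a : ℝ) (hγ₀ : 0 < γ₀) (hγ : γ₀ < γ₁) (ha : 1 < a) :
    ∃ n₀ : ℕ, 1 ≤ n₀ ∧ ∃ l : ℝ, 0 < l ∧
      ∀ (n : ℕ) (aseq : ℕ → ℝ), n₀ < n →
        (∀ i ≤ n, a⁻¹ < aseq i ∧ aseq i < a) →
        (∏ i ∈ Finset.range (n + 1), aseq i) < γ₀ ^ n →
        ∃ (r : ℕ) (ns : Fin r → ℕ),
          (l * n < (r : ℝ)) ∧ StrictMono ns ∧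
          (∀ j, 1 ≤ ns j ∧ ns j ≤ n) ∧
          ∀ j, ∀ k, ns j < k → k ≤ n →
            (∏ i ∈ Finset.Icc (ns j + 1) k, aseq i) < γ₁ ^ (k - ns j) := by
  have ha0 : (0:ℝ) < a := lt_trans zero_lt_one ha
  have hγ₁ : (0:ℝ) < γ₁ := hγ₀.trans hγ
  obtain ⟨La, hLa_def⟩ : ∃ x:ℝ, x = Real.log a := ⟨_, rfl⟩
  obtain ⟨L0, hL0_def⟩ : ∃ x:ℝ, x = Real.log γ₀ := ⟨_, rfl⟩
  obtain ⟨L1, hL1_def⟩ : ∃ x:ℝ, x = Real.log γ₁ := ⟨_, rfl⟩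
  obtain ⟨A1, hA1_def⟩ : ∃ x:ℝ, x = |L1| := ⟨_, rfl⟩
  obtain ⟨δ, hδ_def⟩ : ∃ x:ℝ, x = L1 - L0 := ⟨_, rfl⟩
  obtain ⟨B, hB_def⟩ : ∃ x:ℝ, x = La + A1 + 1 := ⟨_, rfl⟩
  have hLa : 0 < La := by rw [hLa_def]; exact Real.log_pos ha
  have hA1 : 0 ≤ A1 := by rw [hA1_def]; exact abs_nonneg _
  have hA1' : L1 ≤ A1 := by rw [hA1_def]; exact le_abs_self _
  have hA1'' : -L1 ≤ A1 := by rw [hA1_def]; exact neg_le_abs _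
  have hδ : 0 < δ := by
    rw [hδ_def, hL1_def, hL0_def]
    have := Real.log_lt_log hγ₀ hγ
    linarith
  have hB : 0 < B := by rw [hB_def]; linarith
  refine ⟨max 1 (⌈(4*B + 4*A1)/δ⌉₊ + 1), le_max_left _ _, δ / (2*B), by positivity, ?_⟩
  intro n aseq hn hbound hprod
  have hn1 : 1 ≤ n := le_trans (le_max_left _ _) (le_of_lt hn)
  have hnlarge : 2*B - L1 ≤ (n:ℝ) * δ / 2 := by
    have h1 : (⌈(4*B + 4*A1)/δ⌉₊ : ℝ) ≤ n := by
      exact_mod_cast le_of_lt (lt_of_le_of_lt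
        (by omega : ⌈(4*B + 4*A1)/δ⌉₊ ≤ max 1 (⌈(4*B + 4*A1)/δ⌉₊ + 1)) hn)
    have h2 : (4*B + 4*A1)/δ ≤ (n:ℝ) := le_trans (Nat.le_ceil _) h1
    have h3 : 4*B + 4*A1 ≤ (n:ℝ) * δ := by
      rw [div_le_iff₀ hδ] at h2; linarith
    linarith
  set c : ℕ → ℝ := fun i => Real.log (aseq i) - L1 with hc_def
  have hpos : ∀ i ≤ n, 0 < aseq i := fun i hi => lt_trans (inv_pos.2 ha0) (hbound i hi).1
  have hclb : ∀ i, i ≤ n → -B ≤ c i := by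
    intro i hi
    have h1 : Real.log a⁻¹ < Real.log (aseq i) :=
      Real.log_lt_log (inv_pos.2 ha0) (hbound i hi).1
    rw [Real.log_inv, ← hLa_def] at h1
    show -B ≤ Real.log (aseq i) - L1
    rw [hB_def]
    linarith
  have hTn : pT c n < -(n:ℝ) * δ - L1 := by
    have hlogprod : Real.log (∏ i ∈ Finset.range (n+1), aseq i)
        = ∑ i ∈ Finset.range (n+1), Real.log (aseq i) :=
      Real.log_prod (fun i hi => ne_of_gt (hpos i (by
        simp only [Finset.mem_range] at hi; omega)))
    have hpp : 0 < ∏ i ∈ Finset.range (n+1), aseq i :=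
      Finset.prod_pos (fun i hi => hpos i (by
        simp only [Finset.mem_range] at hi; omega))
    have h1 : Real.log (∏ i ∈ Finset.range (n+1), aseq i) < Real.log (γ₀ ^ n) :=
      Real.log_lt_log hpp hprod
    rw [hlogprod, Real.log_pow, ← hL0_def] at h1
    have h2 : pT c n = (∑ i ∈ Finset.range (n+1), Real.log (aseq i)) - ((n:ℝ)+1) * L1 := by
      simp only [pT, hc_def, Finset.sum_sub_distrib, Finset.sum_const, Finset.card_range,
        nsmul_eq_mul]
      push_cast; ring
    have hnd : (n:ℝ) * δ = (n:ℝ)*L1 - (n:ℝ)*L0 := by rw [hδ_def]; ring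
    rw [h2]
    nlinarith [h1, hnd]
  have hT1 : -2*B ≤ pT c 1 := by
    have h0 := hclb 0 (by omega)
    have h1 := hclb 1 hn1
    simp only [pT, Finset.sum_range_succ, Finset.sum_range_zero]
    linarith
  have hcount := pliss_count c n B hB hn1 hclb
  have hcard : δ / (2*B) * n < ((pP c n).card : ℝ) := by
    rw [div_mul_eq_mul_div, div_lt_iff₀ (by positivity)]
    have hBc : B * (((pP c n).card : ℝ)) > (n:ℝ) * δ / 2 := by linarith
    have hr : ((pP c n).card : ℝ) * (2*B) = 2 * (B * ((pP c n).card : ℝ)) := by ring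
    have hr2 : δ * (n:ℝ) = (n:ℝ) * δ := by ring
    linarith
  refine ⟨(pP c n).card, fun j => ((pP c n).orderIsoOfFin rfl j : ℕ), hcard, ?_, ?_, ?_⟩
  · intro i j hij
    exact Subtype.coe_lt_coe.2 (((pP c n).orderIsoOfFin rfl).strictMono hij)
  · intro j
    have hmem : ((pP c n).orderIsoOfFin rfl j : ℕ) ∈ pP c n :=
      ((pP c n).orderIsoOfFin rfl j).2
    simp only [pP, Finset.mem_filter, Finset.mem_Icc] at hmem
    exact hmem.1
  · intro j k hmk hkn
    change ((pP c n).orderIsoOfFin rfl j : ℕ) < k at hmk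
    set m := ((pP c n).orderIsoOfFin rfl j : ℕ) with hm_def
    have hmem : m ∈ pP c n := ((pP c n).orderIsoOfFin rfl j).2
    simp only [pP, Finset.mem_filter, Finset.mem_Icc] at hmem
    have hT : pT c k < pT c m := hmem.2 k hmk hkn
    have hsum0 : ∑ i ∈ Finset.Icc (m+1) k, c i < 0 := by
      have heq := Finset.sum_Ico_eq_sub c (by omega : m+1 ≤ k+1)
      rw [Finset.Ico_add_one_right_eq_Icc] at heq
      simp only [pT] at hT
      rw [heq]; linarith
    have hcardIcc : (Finset.Icc (m+1) k).card = k - m := by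
      rw [Nat.card_Icc]; omega
    have hsum : ∑ i ∈ Finset.Icc (m+1) k, Real.log (aseq i) < ((k - m : ℕ) : ℝ) * L1 := by
      have heq : ∑ i ∈ Finset.Icc (m+1) k, c i
          = (∑ i ∈ Finset.Icc (m+1) k, Real.log (aseq i))
            - ((Finset.Icc (m+1) k).card : ℝ) * L1 := by
        simp only [hc_def, Finset.sum_sub_distrib, Finset.sum_const, nsmul_eq_mul]
      rw [heq, hcardIcc] at hsum0
      linarith
    have hpp : 0 < ∏ i ∈ Finset.Icc (m+1) k, aseq i :=
      Finset.prod_pos (fun i hi => hpos i (by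
        simp only [Finset.mem_Icc] at hi; omega))
    have hlog : Real.log (∏ i ∈ Finset.Icc (m+1) k, aseq i) < Real.log (γ₁ ^ (k - m)) := by
      rw [Real.log_prod (fun i hi => ne_of_gt (hpos i (by
        simp only [Finset.mem_Icc] at hi; omega))), Real.log_pow, ← hL1_def]
      exact hsum
    calc ∏ i ∈ Finset.Icc (m+1) k, aseq i
        = Real.exp (Real.log (∏ i ∈ Finset.Icc (m+1) k, aseq i)) := (Real.exp_log hpp).symm
      _ < Real.exp (Real.log (γ₁ ^ (k - m))) := Real.exp_lt_exp.2 hlog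
      _ = γ₁ ^ (k - m) := Real.exp_log (by positivity)
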